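/- For all m ≥ 0 and all x, y ∈ CC_m: ∂_i(x ⋆ y) = ∂_i(x) ⋆ ∂_i(y) for every 0 ≤ i ≤ m, and σ_j(x ⋆ y) = σ_j(x) ⋆ σ_j(y) for every 0 ≤ j ≤ m. Moreover the unit elements are compatible with the simplicial structure: ∂_i(1_m) = 1_{m−1} for m ≥ 1 and 0 ≤ i ≤ m, and σ_j(1_m) = 1_{m+1} for 0 ≤ j ≤ m. -/

import Mathlib

/-!
STATEMENT 4: For the Hochschild simplicial vector space of a monoidal
`k`-linear category `(𝒜,⊠,𝟙)` with a strong monoidal `k`-linear fibre functor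
`ω`, the product `⋆` on each `CC_m` is compatible with the simplicial
structure: `∂ᵢ(x ⋆ y) = ∂ᵢ(x) ⋆ ∂ᵢ(y)` and `σⱼ(x ⋆ y) = σⱼ(x) ⋆ σⱼ(y)`;
moreover `∂ᵢ(1ₘ) = 1ₘ₋₁` (m ≥ 1) and `σⱼ(1ₘ) = 1ₘ₊₁`.
-/

open CategoryTheory TensorProduct MonoidalCategory

noncomputable section

namespace Tannaka

variable {k : Type} [Field k] {A : Type} [SmallCategory A] [DecidableEq A]
  [Preadditive A] [CategoryTheory.Linear k A]
  [MonoidalCategory A] [MonoidalPreadditive A] [MonoidalLinear k A]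
variable (ω : A ⥤ ModuleCat k) [ω.Additive] [Functor.Linear k ω] [ω.Monoidal]

/-- The chain `Hom(X₁,X₀) ⊗ Hom(X₂,X₁) ⊗ ⋯ ⊗ Hom(Xₙ,Xₙ₋₁)` of a tuple of
objects, as a tensor product over `k` of the `Hom`-spaces. -/
abbrev Chain (n : ℕ) (X : Fin (n+1) → A) : Type :=
  ⨂[k] (i : Fin n), (X ⟨i.1+1, Nat.succ_lt_succ i.2⟩ ⟶ X ⟨i.1, Nat.lt_succ_of_lt i.2⟩)

/-- The summand `ω(X₀)^∨ ⊗ Hom(X₁,X₀) ⊗ ⋯ ⊗ Hom(Xₙ,Xₙ₋₁) ⊗ ω(Xₙ)` of the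
Hochschild module, indexed by a tuple of objects. -/
abbrev Summand (n : ℕ) (X : Fin (n+1) → A) : Type :=
  Module.Dual k (ω.obj (X ⟨0, Nat.succ_pos n⟩)) ⊗[k]
    ((Chain (k := k) n X) ⊗[k] (ω.obj (X ⟨n, Nat.lt_succ_self n⟩)))

/-- `CC ω n = CC_n(𝒜, ω^∨⊗ω)`, the `n`-th term of the Hochschild simplicial
vector space: the direct sum over all `(n+1)`-tuples of objects of the
corresponding summands. -/
abbrev CC (n : ℕ) : Type := DirectSum (Fin (n+1) → A) (Summand ω n)

/-- The pure tensor `φ ⊗ a₁ ⊗ ⋯ ⊗ aₙ ⊗ v` in `CC ω n`. -/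
def mk (n : ℕ) (X : Fin (n+1) → A) (φ : Module.Dual k (ω.obj (X ⟨0, Nat.succ_pos n⟩)))
    (a : ∀ i : Fin n, X ⟨i.1+1, Nat.succ_lt_succ i.2⟩ ⟶ X ⟨i.1, Nat.lt_succ_of_lt i.2⟩)
    (v : ω.obj (X ⟨n, Nat.lt_succ_self n⟩)) : CC ω n :=
  DirectSum.lof k _ (Summand ω n) X (φ ⊗ₜ ((PiTensorProduct.tprod k a) ⊗ₜ v))

/-- Transport of a morphism along equalities of its source and target. -/
def castHom {X Y X' Y' : A} (h1 : X = X') (h2 : Y = Y') (f : X ⟶ Y) : X' ⟶ Y' :=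
  eqToHom h1.symm ≫ f ≫ eqToHom h2

/-- `face n i : CC ω (n+1) →ₗ CC ω n` (for `i : Fin (n+2)`) is the family of
Hochschild face maps `∂ᵢ` precisely when it satisfies the following three
defining formulas on pure tensors:
`∂₀(φ⊗a₁⊗⋯⊗aₙ⊗v) = (φ∘ω(a₁))⊗a₂⊗⋯⊗aₙ⊗v`,
`∂ᵢ(φ⊗a₁⊗⋯⊗aₙ⊗v) = φ⊗a₁⊗⋯⊗(aᵢ∘aᵢ₊₁)⊗⋯⊗aₙ⊗v` for `0 < i < n`, and
`∂ₙ(φ⊗a₁⊗⋯⊗aₙ⊗v) = φ⊗a₁⊗⋯⊗aₙ₋₁⊗ω(aₙ)(v)`.  (Pure tensors span, so these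
formulas determine the maps uniquely.) -/
def IsFace (face : ∀ n : ℕ, Fin (n+2) → (CC ω (n+1) →ₗ[k] CC ω n)) : Prop :=
  (∀ (n : ℕ) (X : Fin (n+2) → A) (φ : Module.Dual k (ω.obj (X ⟨0, Nat.succ_pos (n+1)⟩)))
    (a : ∀ i : Fin (n+1), X ⟨i.1+1, Nat.succ_lt_succ i.2⟩ ⟶ X ⟨i.1, Nat.lt_succ_of_lt i.2⟩)
    (v : ω.obj (X ⟨n+1, Nat.lt_succ_self (n+1)⟩)),
    face n ⟨0, Nat.succ_pos (n+1)⟩ (mk ω (n+1) X φ a v) =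
      mk ω n (fun j => X ⟨j.1+1, Nat.succ_lt_succ j.2⟩)
        (φ ∘ₗ ModuleCat.Hom.hom (ω.map (a ⟨0, Nat.succ_pos n⟩)))
        (fun j => a ⟨j.1+1, Nat.succ_lt_succ j.2⟩) v) ∧
  (∀ (n : ℕ) (p : Fin n) (X : Fin (n+2) → A)
    (φ : Module.Dual k (ω.obj (X ⟨0, Nat.succ_pos (n+1)⟩)))
    (a : ∀ i : Fin (n+1), X ⟨i.1+1, Nat.succ_lt_succ i.2⟩ ⟶ X ⟨i.1, Nat.lt_succ_of_lt i.2⟩)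
    (v : ω.obj (X ⟨n+1, Nat.lt_succ_self (n+1)⟩)),
    face n ⟨p.1+1, Nat.succ_lt_succ (Nat.lt_succ_of_lt p.2)⟩ (mk ω (n+1) X φ a v) =
      mk ω n
        (fun l => if l.1 ≤ p.1 then X ⟨l.1, Nat.lt_succ_of_lt l.2⟩
          else X ⟨l.1+1, Nat.succ_lt_succ l.2⟩)
        (φ ∘ₗ ModuleCat.Hom.hom (ω.map (eqToHom (by dsimp only; rw [if_pos (Nat.zero_le p.1)]))))
        (fun j =>
          if h : j.1 < p.1 then
            castHom (by dsimp only; rw [if_pos (by omega : j.1+1 ≤ p.1)])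
              (by dsimp only; rw [if_pos (by omega : j.1 ≤ p.1)])
              (a ⟨j.1, Nat.lt_succ_of_lt j.2⟩)
          else if h2 : j.1 = p.1 then
            castHom (by dsimp only; rw [if_neg (by omega : ¬ (j.1+1 ≤ p.1))]
                        exact congrArg X (Fin.ext (by dsimp only; omega)))
              (by dsimp only; rw [if_pos (by omega : j.1 ≤ p.1)]
                  exact congrArg X (Fin.ext (by dsimp only; omega)))
              ((a ⟨p.1+1, Nat.succ_lt_succ p.2⟩) ≫ (a ⟨p.1, Nat.lt_succ_of_lt p.2⟩))
          else
            castHom (by dsimp only; rw [if_neg (by omega : ¬ (j.1+1 ≤ p.1))])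
              (by dsimp only; rw [if_neg (by omega : ¬ (j.1 ≤ p.1))])
              (a ⟨j.1+1, Nat.succ_lt_succ j.2⟩))
        ((ω.map (eqToHom (by dsimp only; rw [if_neg (by have := p.2; omega : ¬ (n ≤ p.1))] :
          X ⟨n+1, Nat.lt_succ_self (n+1)⟩ =
          (fun l : Fin (n+1) => if l.1 ≤ p.1 then X ⟨l.1, Nat.lt_succ_of_lt l.2⟩
            else X ⟨l.1+1, Nat.succ_lt_succ l.2⟩) ⟨n, Nat.lt_succ_self n⟩))) v)) ∧
  (∀ (n : ℕ) (X : Fin (n+2) → A) (φ : Module.Dual k (ω.obj (X ⟨0, Nat.succ_pos (n+1)⟩)))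
    (a : ∀ i : Fin (n+1), X ⟨i.1+1, Nat.succ_lt_succ i.2⟩ ⟶ X ⟨i.1, Nat.lt_succ_of_lt i.2⟩)
    (v : ω.obj (X ⟨n+1, Nat.lt_succ_self (n+1)⟩)),
    face n ⟨n+1, Nat.lt_succ_self (n+1)⟩ (mk ω (n+1) X φ a v) =
      mk ω n (fun j => X ⟨j.1, Nat.lt_succ_of_lt j.2⟩) φ
        (fun j => a ⟨j.1, Nat.lt_succ_of_lt j.2⟩)
        (ω.map (a ⟨n, Nat.lt_succ_self n⟩) v))

/-- `split m n N h : CC ω N →ₗ CC ω m ⊗ CC ω n` (for `m + n = N`) is the family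
of splitting maps `Δ_{m,n}` precisely when it satisfies the defining formula
`Δ_{m,n}(φ⊗a₁⊗⋯⊗a_N⊗v) = Σᵢ (φ⊗a₁⊗⋯⊗aₘ⊗eᵢ) ⊗ (eᵢ^∨⊗aₘ₊₁⊗⋯⊗a_N⊗v)` for every
basis `(eᵢ)` of `ω(Xₘ)` (with dual basis `(eᵢ^∨)`); in particular the maps do
not depend on the choice of basis. -/
def IsSplit
    (split : ∀ (m n N : ℕ), m + n = N → (CC ω N →ₗ[k] (CC ω m ⊗[k] CC ω n))) : Prop :=
  ∀ (m n N : ℕ) (hmn : m + n = N) (X : Fin (N+1) → A)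
    (φ : Module.Dual k (ω.obj (X ⟨0, Nat.succ_pos N⟩)))
    (a : ∀ i : Fin N, X ⟨i.1+1, Nat.succ_lt_succ i.2⟩ ⟶ X ⟨i.1, Nat.lt_succ_of_lt i.2⟩)
    (v : ω.obj (X ⟨N, Nat.lt_succ_self N⟩))
    (ι : Type) (_ : Fintype ι) (b : Module.Basis ι k (ω.obj (X ⟨m, by omega⟩))),
    split m n N hmn (mk ω N X φ a v) =
      ∑ i : ι,
        (mk ω m (fun l => X ⟨l.1, by have := l.2; omega⟩) φ
          (fun l => a ⟨l.1, by have := l.2; omega⟩) (b i)) ⊗ₜ[k]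
        (mk ω n (fun l => X ⟨m + l.1, by have := l.2; omega⟩) (b.coord i)
          (fun l => a ⟨m + l.1, by have := l.2; omega⟩)
          (ω.map (eqToHom (congrArg X (Fin.ext (by dsimp only; omega)))) v))

/-- The total differential `d = Σᵢ (−1)ⁱ ∂ᵢ : CC_{N+1} → CC_N`. -/
def dTot (face : ∀ n : ℕ, Fin (n+2) → (CC ω (n+1) →ₗ[k] CC ω n)) (N : ℕ) :
    CC ω (N+1) →ₗ[k] CC ω N :=
  ∑ i : Fin (N+2), ((-1 : k) ^ (i : ℕ)) • face N i

/-- `star m : CC ω m → CC ω m → CC ω m` is the bilinear product `⋆` precisely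
when it satisfies the defining formula on pure tensors:
`(φ⊗a₁⊗⋯⊗aₘ⊗v) ⋆ (φ'⊗a₁'⊗⋯⊗aₘ'⊗v') =
  ((φ⊗φ')∘μ⁻¹) ⊗ (a₁⊠a₁') ⊗ ⋯ ⊗ (aₘ⊠aₘ') ⊗ μ(v⊗v')`. -/
def IsStar (star : ∀ m : ℕ, CC ω m →ₗ[k] CC ω m →ₗ[k] CC ω m) : Prop :=
  ∀ (m : ℕ) (X X' : Fin (m+1) → A)
    (φ : Module.Dual k (ω.obj (X ⟨0, Nat.succ_pos m⟩)))
    (φ' : Module.Dual k (ω.obj (X' ⟨0, Nat.succ_pos m⟩)))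
    (a : ∀ i : Fin m, X ⟨i.1+1, Nat.succ_lt_succ i.2⟩ ⟶ X ⟨i.1, Nat.lt_succ_of_lt i.2⟩)
    (a' : ∀ i : Fin m, X' ⟨i.1+1, Nat.succ_lt_succ i.2⟩ ⟶ X' ⟨i.1, Nat.lt_succ_of_lt i.2⟩)
    (v : ω.obj (X ⟨m, Nat.lt_succ_self m⟩)) (v' : ω.obj (X' ⟨m, Nat.lt_succ_self m⟩)),
    star m (mk ω m X φ a v) (mk ω m X' φ' a' v') =
      mk ω m (fun j => X j ⊗ X' j)
        ((TensorProduct.lid k k).toLinearMap ∘ₗ TensorProduct.map φ φ' ∘ₗ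
          ((Functor.OplaxMonoidal.δ ω (X ⟨0, Nat.succ_pos m⟩) (X' ⟨0, Nat.succ_pos m⟩)).hom :
            _ →ₗ[k] _))
        (fun i => MonoidalCategory.tensorHom (a i) (a' i))
        (Functor.LaxMonoidal.μ ω (X ⟨m, Nat.lt_succ_self m⟩) (X' ⟨m, Nat.lt_succ_self m⟩)
          (v ⊗ₜ[k] v'))

/-- The unit element `1ₘ = ū ⊗ id_𝟙 ⊗ ⋯ ⊗ id_𝟙 ⊗ u(1) ∈ CC ω m`. -/
def oneCC (m : ℕ) : CC ω m :=
  mk ω m (fun _ => 𝟙_ A) ((Functor.OplaxMonoidal.η ω).hom : ω.obj (𝟙_ A) →ₗ[k] k)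
    (fun _ => 𝟙 (𝟙_ A)) (Functor.LaxMonoidal.ε ω (1 : k))

/-- `degen n j : CC ω n →ₗ CC ω (n+1)` (for `j : Fin (n+1)`) is the family of
degeneracy maps `σⱼ` precisely when it satisfies the defining formula on pure
tensors: `σⱼ` inserts the identity morphism `id_{Xⱼ}` after `aⱼ`. -/
def IsDegeneracy (degen : ∀ n : ℕ, Fin (n+1) → (CC ω n →ₗ[k] CC ω (n+1))) : Prop :=
  ∀ (n : ℕ) (j : Fin (n+1)) (X : Fin (n+1) → A)
    (φ : Module.Dual k (ω.obj (X ⟨0, Nat.succ_pos n⟩)))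
    (a : ∀ i : Fin n, X ⟨i.1+1, Nat.succ_lt_succ i.2⟩ ⟶ X ⟨i.1, Nat.lt_succ_of_lt i.2⟩)
    (v : ω.obj (X ⟨n, Nat.lt_succ_self n⟩)),
    degen n j (mk ω n X φ a v) =
      mk ω (n+1)
        (fun l => if hl : l.1 ≤ j.1 then X ⟨l.1, by have := j.2; omega⟩
          else X ⟨l.1-1, by have := l.2; omega⟩)
        (φ ∘ₗ ModuleCat.Hom.hom (ω.map (eqToHom (by dsimp only; rw [dif_pos (Nat.zero_le j.1)]))))
        (fun i =>
          if h : i.1 < j.1 then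
            castHom (by dsimp only; rw [dif_pos (by omega : i.1+1 ≤ j.1)])
              (by dsimp only; rw [dif_pos (by omega : i.1 ≤ j.1)])
              (a ⟨i.1, by have := i.2; have := j.2; omega⟩)
          else if h2 : i.1 = j.1 then
            castHom (by dsimp only; rw [dif_neg (by omega : ¬ (i.1+1 ≤ j.1))]
                        exact congrArg X (Fin.ext (by dsimp only; omega)))
              (by dsimp only; rw [dif_pos (by omega : i.1 ≤ j.1)]
                  exact congrArg X (Fin.ext (by dsimp only; omega)))
              (𝟙 (X ⟨j.1, j.2⟩))
          else
            castHom (by dsimp only; rw [dif_neg (by omega : ¬ (i.1+1 ≤ j.1))]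
                        exact congrArg X (Fin.ext (by dsimp only; omega)))
              (by dsimp only; rw [dif_neg (by omega : ¬ (i.1 ≤ j.1))])
              (a ⟨i.1-1, by have := i.2; omega⟩))
        (ω.map (eqToHom (by dsimp only
                            rw [dif_neg (by have := j.2; omega : ¬ (n+1 ≤ j.1))]
                            exact congrArg X (Fin.ext (by dsimp only; omega)))) v)

/-! ### Auxiliary lemmas -/

set_option linter.unusedSectionVars false

section Aux

@[simp] lemma castHom_rfl {X Y : A} (h1 : X = X) (h2 : Y = Y) (f : X ⟶ Y) :
    castHom h1 h2 f = f := by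
  simp [castHom]

lemma castHom_castHom {X X' X'' Y Y' Y'' : A} (h1 : X = X') (h2 : Y = Y')
    (h3 : X' = X'') (h4 : Y' = Y'') (f : X ⟶ Y) :
    castHom h3 h4 (castHom h1 h2 f) = castHom (h1.trans h3) (h2.trans h4) f := by
  subst h1 h2 h3 h4; simp

lemma castHom_tensor {X1 Y1 X2 Y2 X1' Y1' X2' Y2' : A}
    (h1 : X1 = X1') (h2 : Y1 = Y1') (h3 : X2 = X2') (h4 : Y2 = Y2')
    (f : X1 ⟶ Y1) (g : X2 ⟶ Y2) :
    (castHom h1 h2 f ⊗ₘ castHom h3 h4 g : _ ⟶ _) =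
      castHom (by rw [h1, h3]) (by rw [h2, h4]) (f ⊗ₘ g) := by
  subst h1 h2 h3 h4; simp

lemma omap_eqToHom_self {X : A} (h : X = X) (w : ω.obj X) :
    ω.map (eqToHom h) w = w := by
  simp

lemma omap_eqToHom_self' {X : A} (h : X = X) :
    ω.map (eqToHom h) = 𝟙 (ω.obj X) := by
  simp

lemma omap_eqToHom_trans {X Y Z : A} (h1 : X = Y) (h2 : Y = Z) (w : ω.obj X) :
    ω.map (eqToHom h2) (ω.map (eqToHom h1) w) = ω.map (eqToHom (h1.trans h2)) w := by
  subst h1 h2; simp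

lemma map_id_id_apply {M N : ModuleCat k} (t : M ⊗[k] N) :
    TensorProduct.map (ModuleCat.Hom.hom (𝟙 M)) (ModuleCat.Hom.hom (𝟙 N)) t = t := by
  induction t using TensorProduct.induction_on with
  | zero => simp
  | tmul x y => rfl
  | add a b ha hb => simp [ha, hb]

lemma δ_eqToHom {X Y X' Y' : A} (h1 : X = X') (h2 : Y = Y') (h : X ⊗ Y = X' ⊗ Y')
    (w : ω.obj (X ⊗ Y)) :
    Functor.OplaxMonoidal.δ ω X' Y' (ω.map (eqToHom h) w) =
      TensorProduct.map (ω.map (eqToHom h1)).hom (ω.map (eqToHom h2)).hom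
        (Functor.OplaxMonoidal.δ ω X Y w) := by
  subst h1 h2
  rw [omap_eqToHom_self]
  simp only [eqToHom_refl, CategoryTheory.Functor.map_id]
  exact (map_id_id_apply (Functor.OplaxMonoidal.δ ω X Y w)).symm

lemma μ_eqToHom {X Y X' Y' : A} (h1 : X = X') (h2 : Y = Y') (h : X ⊗ Y = X' ⊗ Y')
    (z : ω.obj X ⊗[k] ω.obj Y) :
    ω.map (eqToHom h) (Functor.LaxMonoidal.μ ω X Y z) =
      Functor.LaxMonoidal.μ ω X' Y'
        (TensorProduct.map (ω.map (eqToHom h1)).hom (ω.map (eqToHom h2)).hom z) := by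
  subst h1 h2
  rw [omap_eqToHom_self]
  simp only [eqToHom_refl, CategoryTheory.Functor.map_id]
  rw [map_id_id_apply]

lemma map_map_apply {M N P M' N' P' : Type} [AddCommMonoid M] [AddCommMonoid N]
    [AddCommMonoid P] [AddCommMonoid M'] [AddCommMonoid N'] [AddCommMonoid P']
    [Module k M] [Module k N] [Module k P] [Module k M'] [Module k N'] [Module k P']
    (f : M →ₗ[k] N) (f' : N →ₗ[k] P) (g : M' →ₗ[k] N') (g' : N' →ₗ[k] P')
    (z : M ⊗[k] M') :
    TensorProduct.map f' g' (TensorProduct.map f g z) =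
      TensorProduct.map (f' ∘ₗ f) (g' ∘ₗ g) z := by
  rw [TensorProduct.map_comp]; rfl

lemma δ_natural_apply {X Y X' Y' : A} (f : X ⟶ Y) (g : X' ⟶ Y') (w : ω.obj (X ⊗ X')) :
    Functor.OplaxMonoidal.δ ω Y Y' (ω.map (f ⊗ₘ g) w) =
      TensorProduct.map (ω.map f).hom (ω.map g).hom (Functor.OplaxMonoidal.δ ω X X' w) := by
  have := Functor.OplaxMonoidal.δ_natural ω f g
  have h2 := congrArg (fun (F : ω.obj (X ⊗ X') ⟶ _) => F w) this
  exact h2.symm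

lemma μ_natural_apply {X Y X' Y' : A} (f : X ⟶ Y) (g : X' ⟶ Y')
    (z : ω.obj X ⊗[k] ω.obj X') :
    ω.map (f ⊗ₘ g) (Functor.LaxMonoidal.μ ω X X' z) =
      Functor.LaxMonoidal.μ ω Y Y' (TensorProduct.map (ω.map f).hom (ω.map g).hom z) := by
  have := Functor.LaxMonoidal.μ_natural ω f g
  have h2 := congrArg (fun (F : (ω.obj X ⊗ ω.obj X' : ModuleCat k) ⟶ _) => F z) this
  exact h2.symm

lemma phi_mid {Z Z' W W' V : A} (h1 : Z = W) (h2 : Z' = W') (hA : V = W ⊗ W')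
    (hB : Z ⊗ Z' = V) (φ : Module.Dual k (ω.obj W)) (φ' : Module.Dual k (ω.obj W'))
    (w : ω.obj (Z ⊗ Z')) :
    ((TensorProduct.lid k k).toLinearMap ∘ₗ TensorProduct.map φ φ' ∘ₗ
      ((Functor.OplaxMonoidal.δ ω W W').hom : _ →ₗ[k] _))
      (ω.map (eqToHom hA) (ω.map (eqToHom hB) w)) =
    ((TensorProduct.lid k k).toLinearMap ∘ₗ
      TensorProduct.map (φ ∘ₗ (ω.map (eqToHom h1)).hom) (φ' ∘ₗ (ω.map (eqToHom h2)).hom) ∘ₗ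
      ((Functor.OplaxMonoidal.δ ω Z Z').hom : _ →ₗ[k] _)) w := by
  subst h1 h2 hA
  rw [omap_eqToHom_self, omap_eqToHom_self, omap_eqToHom_self', omap_eqToHom_self']
  rfl

lemma mu_mid {Z Z' W W' V : A} (h1 : Z = W) (h2 : Z' = W') (hA : Z ⊗ Z' = V)
    (hB : V = W ⊗ W') (v : ω.obj Z) (v' : ω.obj Z') :
    Functor.LaxMonoidal.μ ω W W' (ω.map (eqToHom h1) v ⊗ₜ[k] ω.map (eqToHom h2) v') =
      ω.map (eqToHom hB) (ω.map (eqToHom hA)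
        (Functor.LaxMonoidal.μ ω Z Z' (v ⊗ₜ[k] v'))) := by
  subst h1 h2
  subst hB
  rw [omap_eqToHom_self, omap_eqToHom_self, omap_eqToHom_self, omap_eqToHom_self]

lemma castHom_id {X Y : A} (h1 h2 : X = Y) : castHom h1 h2 (𝟙 X) = 𝟙 Y := by
  subst h1; simp

lemma dual_unit {Z V : A} (hA : V = Z) (hB : Z = V)
    (η' : Module.Dual k (ω.obj Z)) (w : ω.obj Z) :
    (η' ∘ₗ (ω.map (eqToHom hA)).hom) (ω.map (eqToHom hB) w) = η' w := by
  subst hA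
  rw [LinearMap.comp_apply, omap_eqToHom_self, omap_eqToHom_self]

lemma omap_trans_self {Z V : A} (hA : Z = V) (hB : V = Z) (v : ω.obj Z) :
    v = ω.map (eqToHom hB) (ω.map (eqToHom hA) v) := by
  subst hA
  rw [omap_eqToHom_self, omap_eqToHom_self]

end Aux

section Aux2
set_option linter.unusedSectionVars false

lemma mk_congr_components (n : ℕ) (X : Fin (n+1) → A)
    {φ1 φ2 : Module.Dual k (ω.obj (X ⟨0, Nat.succ_pos n⟩))}
    {a1 a2 : ∀ i : Fin n, X ⟨i.1+1, Nat.succ_lt_succ i.2⟩ ⟶ X ⟨i.1, Nat.lt_succ_of_lt i.2⟩}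
    {v1 v2 : ω.obj (X ⟨n, Nat.lt_succ_self n⟩)}
    (hφ : φ1 = φ2) (ha : a1 = a2) (hv : v1 = v2) :
    mk ω n X φ1 a1 v1 = mk ω n X φ2 a2 v2 := by
  subst hφ ha hv; rfl

lemma mk_eq_mk (n : ℕ) {Y1 Y2 : Fin (n+1) → A} (h : Y1 = Y2)
    (φ1 : Module.Dual k (ω.obj (Y1 ⟨0, Nat.succ_pos n⟩)))
    (φ2 : Module.Dual k (ω.obj (Y2 ⟨0, Nat.succ_pos n⟩)))
    (a1 : ∀ i : Fin n, Y1 ⟨i.1+1, Nat.succ_lt_succ i.2⟩ ⟶ Y1 ⟨i.1, Nat.lt_succ_of_lt i.2⟩)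
    (a2 : ∀ i : Fin n, Y2 ⟨i.1+1, Nat.succ_lt_succ i.2⟩ ⟶ Y2 ⟨i.1, Nat.lt_succ_of_lt i.2⟩)
    (v1 : ω.obj (Y1 ⟨n, Nat.lt_succ_self n⟩)) (v2 : ω.obj (Y2 ⟨n, Nat.lt_succ_self n⟩))
    (hφ : ∀ w : ω.obj (Y2 ⟨0, Nat.succ_pos n⟩),
      φ1 (ω.map (eqToHom (congrFun h ⟨0, Nat.succ_pos n⟩).symm) w) = φ2 w)
    (ha : ∀ i : Fin n, a2 i =
      castHom (congrFun h ⟨i.1+1, Nat.succ_lt_succ i.2⟩)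
        (congrFun h ⟨i.1, Nat.lt_succ_of_lt i.2⟩) (a1 i))
    (hv : v2 = ω.map (eqToHom (congrFun h ⟨n, Nat.lt_succ_self n⟩)) v1) :
    mk ω n Y1 φ1 a1 v1 = mk ω n Y2 φ2 a2 v2 := by
  subst h
  refine mk_congr_components ω n Y1 ?_ ?_ ?_
  · refine LinearMap.ext fun w => ?_
    rw [← hφ w, omap_eqToHom_self]
  · funext i
    rw [ha i, castHom_rfl]
  · rw [hv, omap_eqToHom_self]

lemma CC_induction {n : ℕ} {P : CC ω n → Prop} (zero : P 0)
    (add : ∀ x y, P x → P y → P (x + y))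
    (tensor : ∀ X φ a v, P (mk ω n X φ a v)) (x : CC ω n) : P x := by
  induction x using DirectSum.induction_on with
  | zero => exact zero
  | add x y hx hy => exact add x y hx hy
  | of X t =>
    have key : ∀ t : Summand ω n X, P (DirectSum.of (Summand ω n) X t) := by
      intro t
      induction t using TensorProduct.induction_on with
      | zero => simpa using zero
      | add s1 s2 h1 h2 => rw [map_add]; exact add _ _ h1 h2
      | tmul φ s =>
        induction s using TensorProduct.induction_on with
        | zero => rw [TensorProduct.tmul_zero, map_zero]; exact zero
        | add s1 s2 h1 h2 =>
          rw [TensorProduct.tmul_add, map_add]; exact add _ _ h1 h2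
        | tmul c v =>
          induction c using PiTensorProduct.induction_on with
          | smul_tprod r a =>
            have e : (φ ⊗ₜ[k] ((r • PiTensorProduct.tprod k a) ⊗ₜ[k] v) : Summand ω n X)
                = (r • φ) ⊗ₜ[k] ((PiTensorProduct.tprod k a) ⊗ₜ[k] v) := by
              rw [← TensorProduct.smul_tmul', ← TensorProduct.smul_tmul]
            rw [e]
            exact tensor X (r • φ) a v
          | add s1 s2 h1 h2 =>
            rw [TensorProduct.add_tmul, TensorProduct.tmul_add, map_add]
            exact add _ _ h1 h2
    exact key t

end Aux2

section Main
set_option linter.unusedSectionVars false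

set_option maxHeartbeats 1000000 in
lemma face_star
    (face : ∀ n : ℕ, Fin (n+2) → (CC ω (n+1) →ₗ[k] CC ω n)) (hface : IsFace ω face)
    (star : ∀ m : ℕ, CC ω m →ₗ[k] CC ω m →ₗ[k] CC ω m) (hstar : IsStar ω star)
    (m : ℕ) (i : Fin (m+2)) (x y : CC ω (m+1)) :
    face m i (star (m+1) x y) = star m (face m i x) (face m i y) := by
  obtain ⟨hface0, hfacemid, hfacelast⟩ := hface
  induction x using CC_induction with
  | zero => simp
  | add x1 x2 h1 h2 => simp [map_add, LinearMap.add_apply, h1, h2]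
  | tensor X φ a v =>
    induction y using CC_induction with
    | zero => simp
    | add y1 y2 h1 h2 => simp [map_add, h1, h2]
    | tensor X' φ' a' v' =>
      rw [hstar]
      rcases i with ⟨iv, hiv⟩
      rcases Nat.lt_or_ge iv 1 with hc | hc
      · -- i = 0
        obtain rfl : iv = 0 := by omega
        rw [hface0 m (fun j => X j ⊗ X' j), hface0 m X, hface0 m X', hstar]
        refine mk_eq_mk ω m rfl _ _ _ _ _ _ ?_ ?_ ?_
        · intro w
          rw [omap_eqToHom_self]
          simp only [LinearMap.comp_apply]
          rw [TensorProduct.map_comp]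
          simp only [LinearMap.comp_apply]
          exact congrArg (fun z => (TensorProduct.lid k k) ((TensorProduct.map φ φ') z))
            (δ_natural_apply ω (a ⟨0, Nat.succ_pos m⟩) (a' ⟨0, Nat.succ_pos m⟩) w)
        · intro j
          rw [castHom_rfl]
        · rw [omap_eqToHom_self]
      · rcases Nat.lt_or_ge iv (m+1) with hc2 | hc2
        · -- middle
          obtain ⟨q, rfl⟩ : ∃ q, iv = q + 1 := ⟨iv-1, by omega⟩
          have hq : q < m := by omega
          rw [hfacemid m ⟨q, hq⟩ (fun j => X j ⊗ X' j), hfacemid m ⟨q, hq⟩ X,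
            hfacemid m ⟨q, hq⟩ X', hstar]
          refine mk_eq_mk ω m (funext fun l => ?_) _ _ _ _ _ _ ?_ ?_ ?_
          · by_cases hl : l.1 ≤ q <;> simp [hl]
          · intro w
            exact phi_mid ω _ _ _ _ φ φ' w
          · intro j
            rcases Nat.lt_trichotomy j.1 q with h1 | h1 | h1
            · simp only [dif_pos (show j.1 < q from h1)]
              rw [castHom_tensor, castHom_castHom]
            · simp only [dif_neg (show ¬ j.1 < q by omega),
                dif_pos (show j.1 = q from h1)]
              rw [castHom_tensor, ← MonoidalCategory.tensorHom_comp_tensorHom, castHom_castHom]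
            · simp only [dif_neg (show ¬ j.1 < q by omega),
                dif_neg (show ¬ j.1 = q by omega)]
              rw [castHom_tensor, castHom_castHom]
          · exact mu_mid ω _ _ _ _ v v'
        · -- last
          obtain rfl : iv = m + 1 := by omega
          rw [hfacelast m (fun j => X j ⊗ X' j), hfacelast m X, hfacelast m X', hstar]
          refine mk_eq_mk ω m rfl _ _ _ _ _ _ ?_ ?_ ?_
          · intro w
            rw [omap_eqToHom_self]
          · intro j
            rw [castHom_rfl]
          · rw [omap_eqToHom_self, μ_natural_apply, TensorProduct.map_tmul]

end Main


set_option maxHeartbeats 2000000 in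
lemma degen_star
    (degen : ∀ n : ℕ, Fin (n+1) → (CC ω n →ₗ[k] CC ω (n+1))) (hdegen : IsDegeneracy ω degen)
    (star : ∀ m : ℕ, CC ω m →ₗ[k] CC ω m →ₗ[k] CC ω m) (hstar : IsStar ω star)
    (m : ℕ) (j : Fin (m+1)) (x y : CC ω m) :
    degen m j (star m x y) = star (m+1) (degen m j x) (degen m j y) := by
  induction x using CC_induction with
  | zero => simp
  | add x1 x2 h1 h2 => simp [map_add, LinearMap.add_apply, h1, h2]
  | tensor X φ a v =>
    induction y using CC_induction with
    | zero => simp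
    | add y1 y2 h1 h2 => simp [map_add, h1, h2]
    | tensor X' φ' a' v' =>
      rw [hstar, hdegen m j (fun l => X l ⊗ X' l), hdegen m j X, hdegen m j X', hstar]
      refine mk_eq_mk ω (m+1) (funext fun l => ?_) _ _ _ _ _ _ ?_ ?_ ?_
      · by_cases hl : l.1 ≤ j.1 <;> simp [hl]
      · intro w
        exact phi_mid ω _ _ _ _ φ φ' w
      · intro i
        rcases Nat.lt_trichotomy i.1 j.1 with h1 | h1 | h1
        · simp only [dif_pos (show i.1 < j.1 from h1)]
          rw [castHom_tensor, castHom_castHom]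
        · simp only [dif_neg (show ¬ i.1 < j.1 by omega),
            dif_pos (show i.1 = j.1 from h1)]
          rw [castHom_tensor, MonoidalCategory.id_tensorHom_id, castHom_castHom]
        · simp only [dif_neg (show ¬ i.1 < j.1 by omega),
            dif_neg (show ¬ i.1 = j.1 by omega)]
          rw [castHom_tensor, castHom_castHom]
      · exact mu_mid ω _ _ _ _ v v'

set_option maxHeartbeats 2000000 in
lemma face_one
    (face : ∀ n : ℕ, Fin (n+2) → (CC ω (n+1) →ₗ[k] CC ω n)) (hface : IsFace ω face)
    (m : ℕ) (i : Fin (m+2)) : face m i (oneCC ω (m+1)) = oneCC ω m := by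
  obtain ⟨hface0, hfacemid, hfacelast⟩ := hface
  rcases i with ⟨iv, hiv⟩
  rcases Nat.lt_or_ge iv 1 with hc | hc
  · obtain rfl : iv = 0 := by omega
    rw [show oneCC ω (m+1) = mk ω (m+1) (fun _ => 𝟙_ A) _ (fun _ => 𝟙 (𝟙_ A)) _ from rfl,
      hface0 m (fun _ => 𝟙_ A)]
    refine mk_eq_mk ω m rfl _ _ _ _ _ _ ?_ ?_ ?_
    · intro w
      rw [omap_eqToHom_self]
      simp only [LinearMap.comp_apply, CategoryTheory.Functor.map_id]
      rfl
    · intro i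
      rw [castHom_rfl]
    · rw [omap_eqToHom_self]
  · rcases Nat.lt_or_ge iv (m+1) with hc2 | hc2
    · obtain ⟨q, rfl⟩ : ∃ q, iv = q + 1 := ⟨iv-1, by omega⟩
      have hq : q < m := by omega
      rw [show oneCC ω (m+1) = mk ω (m+1) (fun _ => 𝟙_ A) _ (fun _ => 𝟙 (𝟙_ A)) _ from rfl,
        hfacemid m ⟨q, hq⟩ (fun _ => 𝟙_ A)]
      refine mk_eq_mk ω m (funext fun l => ?_) _ _ _ _ _ _ ?_ ?_ ?_
      · by_cases hl : l.1 ≤ q <;> simp [hl]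
      · intro w
        exact dual_unit ω _ _ _ w
      · intro i
        rcases Nat.lt_trichotomy i.1 q with h1 | h1 | h1
        · simp only [dif_pos (show i.1 < q from h1)]
          rw [castHom_castHom]
          exact (castHom_id _ _).symm
        · simp only [dif_neg (show ¬ i.1 < q by omega),
            dif_pos (show i.1 = q from h1)]
          rw [castHom_castHom, Category.id_comp]
          exact (castHom_id _ _).symm
        · simp only [dif_neg (show ¬ i.1 < q by omega),
            dif_neg (show ¬ i.1 = q by omega)]
          rw [castHom_castHom]
          exact (castHom_id _ _).symm
      · exact omap_trans_self ω _ _ _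
    · obtain rfl : iv = m + 1 := by omega
      rw [show oneCC ω (m+1) = mk ω (m+1) (fun _ => 𝟙_ A) _ (fun _ => 𝟙 (𝟙_ A)) _ from rfl,
        hfacelast m (fun _ => 𝟙_ A)]
      refine mk_eq_mk ω m rfl _ _ _ _ _ _ ?_ ?_ ?_
      · intro w
        rw [omap_eqToHom_self]
      · intro i
        rw [castHom_rfl]
      · rw [omap_eqToHom_self]
        simp only [CategoryTheory.Functor.map_id]
        rfl

set_option maxHeartbeats 2000000 in
lemma degen_one
    (degen : ∀ n : ℕ, Fin (n+1) → (CC ω n →ₗ[k] CC ω (n+1))) (hdegen : IsDegeneracy ω degen)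
    (m : ℕ) (j : Fin (m+1)) : degen m j (oneCC ω m) = oneCC ω (m+1) := by
  rw [show oneCC ω m = mk ω m (fun _ => 𝟙_ A) _ (fun _ => 𝟙 (𝟙_ A)) _ from rfl,
    hdegen m j (fun _ => 𝟙_ A)]
  refine mk_eq_mk ω (m+1) (funext fun l => ?_) _ _ _ _ _ _ ?_ ?_ ?_
  · by_cases hl : l.1 ≤ j.1 <;> simp [hl]
  · intro w
    exact dual_unit ω _ _ _ w
  · intro i
    rcases Nat.lt_trichotomy i.1 j.1 with h1 | h1 | h1
    · simp only [dif_pos (show i.1 < j.1 from h1)]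
      rw [castHom_castHom]
      exact (castHom_id _ _).symm
    · simp only [dif_neg (show ¬ i.1 < j.1 by omega),
        dif_pos (show i.1 = j.1 from h1)]
      rw [castHom_castHom]
      exact (castHom_id _ _).symm
    · simp only [dif_neg (show ¬ i.1 < j.1 by omega),
        dif_neg (show ¬ i.1 = j.1 by omega)]
      rw [castHom_castHom]
      exact (castHom_id _ _).symm
  · exact omap_trans_self ω _ _ _


theorem star_simplicial_compatibility
    [∀ X : A, FiniteDimensional k (ω.obj X)]
    (face : ∀ n : ℕ, Fin (n+2) → (CC ω (n+1) →ₗ[k] CC ω n)) (hface : IsFace ω face)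
    (degen : ∀ n : ℕ, Fin (n+1) → (CC ω n →ₗ[k] CC ω (n+1))) (hdegen : IsDegeneracy ω degen)
    (star : ∀ m : ℕ, CC ω m →ₗ[k] CC ω m →ₗ[k] CC ω m) (hstar : IsStar ω star) :
    -- the face maps are multiplicative for ⋆
    (∀ (m : ℕ) (i : Fin (m+2)) (x y : CC ω (m+1)),
      face m i (star (m+1) x y) = star m (face m i x) (face m i y)) ∧
    -- the degeneracy maps are multiplicative for ⋆
    (∀ (m : ℕ) (j : Fin (m+1)) (x y : CC ω m),
      degen m j (star m x y) = star (m+1) (degen m j x) (degen m j y)) ∧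
    -- the unit elements are compatible with the simplicial structure
    (∀ (m : ℕ) (i : Fin (m+2)), face m i (oneCC ω (m+1)) = oneCC ω m) ∧
    (∀ (m : ℕ) (j : Fin (m+1)), degen m j (oneCC ω m) = oneCC ω (m+1)) := by
  exact ⟨fun m i x y => face_star ω face hface star hstar m i x y,
    fun m j x y => degen_star ω degen hdegen star hstar m j x y,
    fun m i => face_one ω face hface m i,
    fun m j => degen_one ω degen hdegen m j⟩

end Tannaka
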